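/- Let t ≥ 1 and let Y₁,…,Y_t be real random variables with E[|Y_i Y_{i+1} ⋯ Y_j|] < ∞ for all 1 ≤ i ≤ j ≤ t. Then 𝒟*(Y₁,…,Y_t) = Σ_{(ℓ,η₁,…,η_ℓ)∈C(t)} (−1)^{ℓ−1} [η₁,…,η_ℓ]▷(Y₁,…,Y_t), where C(t) is the set of all compositions of t; and 𝒟(Y₁,…,Y_t) = Y₁Y₂⋯Y_t − 𝒟*(Y₁,…,Y_t) − Σ_{j=1}^{t−1} Y₁⋯Y_j · 𝒟*(Y_{j+1},…,Y_t). -/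

import Mathlib

open MeasureTheory

noncomputable section

namespace Paper

variable {Ω : Type*} [MeasurableSpace Ω]

/-- The pointwise product of a list of random variables. -/
def listProd (L : List (Ω → ℝ)) : Ω → ℝ := fun ω => (L.map fun Y => Y ω).prod

/-- The operator `𝒟`, defined recursively by `𝒟(Y) = Y - E[Y]` and
`𝒟(Y₁,…,Y_t) = Y₁·𝒟(Y₂,…,Y_t) - E[Y₁·𝒟(Y₂,…,Y_t)]`. -/
def Dop (μ : Measure Ω) : List (Ω → ℝ) → Ω → ℝ
  | [] => fun _ => 0
  | [Y] => fun ω => Y ω - ∫ ω', Y ω' ∂μ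
  | Y :: Ys => fun ω => Y ω * Dop μ Ys ω - ∫ ω', Y ω' * Dop μ Ys ω' ∂μ

/-- The generalized covariance operator `𝒟*`, defined by `𝒟*(Y) = E[Y]` and
`𝒟*(Y₁,…,Y_t) = E[Y₁·𝒟(Y₂,…,Y_t)]`. -/
def Dstar (μ : Measure Ω) : List (Ω → ℝ) → ℝ
  | [] => 0
  | [Y] => ∫ ω, Y ω ∂μ
  | Y :: Ys => ∫ ω, Y ω * Dop μ Ys ω ∂μ

/-- The block-product `[η₁,…,η_ℓ] ▷ (Y₀,…,Y_{t-1})`: the product of the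
expectations of the products of `Y` over the consecutive blocks of the
composition `c` of `t`. -/
def blockProd (μ : Measure Ω) {t : ℕ} (c : Composition t) (Y : ℕ → Ω → ℝ) : ℝ :=
  ∏ i : Fin c.length, ∫ ω, ∏ j : Fin (c.blocksFun i), Y (c.embedding i j).val ω ∂μ

/-- The list obtained from `Y₀,…,Y_{t-1}` by multiplying the variables within
each block of the composition `c` of `t`. -/
def blockVars {t : ℕ} (c : Composition t) (Y : ℕ → Ω → ℝ) : List (Ω → ℝ) :=
  List.ofFn fun i : Fin c.length => fun ω =>
    ∏ j : Fin (c.blocksFun i), Y (c.embedding i j).val ω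

/-! ### Auxiliary material -/

open Finset

set_option linter.unusedSectionVars false

lemma ofFn_nat_congr (f : ℕ → Ω → ℝ) {a b s r : ℕ} (hab : a = b) (hsr : s = r) :
    (List.ofFn fun i : Fin a => f (s + i.val)) = (List.ofFn fun i : Fin b => f (r + i.val)) := by
  subst hab; subst hsr; rfl

lemma Dop_cons (μ : Measure Ω) (a : Ω → ℝ) (l : List (Ω → ℝ)) (hl : l ≠ []) :
    Dop μ (a :: l) = fun ω => a ω * Dop μ l ω - ∫ ω', a ω' * Dop μ l ω' ∂μ := by
  cases l with
  | nil => exact absurd rfl hl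
  | cons b l => simp [Dop]

lemma Dstar_cons (μ : Measure Ω) (a : Ω → ℝ) (l : List (Ω → ℝ)) (hl : l ≠ []) :
    Dstar μ (a :: l) = ∫ ω, a ω * Dop μ l ω ∂μ := by
  cases l with
  | nil => exact absurd rfl hl
  | cons b l => simp [Dstar]

lemma ofFn_shift_succ (Y : ℕ → Ω → ℝ) (n s : ℕ) :
    (List.ofFn fun i : Fin (n + 1) => Y (s + i.val))
      = Y s :: List.ofFn fun i : Fin n => Y (s + 1 + i.val) := by
  rw [List.ofFn_succ]
  exact congrArg₂ _ rfl
    (congrArg List.ofFn (funext fun i => congrArg Y (by simp only [Fin.val_succ]; omega)))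

lemma shift_prod_succ (Y : ℕ → Ω → ℝ) (m s : ℕ) (ω : Ω) :
    ∏ i ∈ range (m + 1), Y (s + i) ω = Y s ω * ∏ i ∈ range m, Y (s + 1 + i) ω := by
  rw [prod_range_succ' (fun i => Y (s + i) ω) m, mul_comm]
  exact congrArg₂ _ rfl
    (prod_congr rfl fun i _ => congrFun (congrArg Y (by omega : s + (i + 1) = s + 1 + i)) ω)

lemma dop_exp (μ : Measure Ω) (Y : ℕ → Ω → ℝ) :
    ∀ n s : ℕ, Dop μ (List.ofFn fun i : Fin (n + 1) => Y (s + i.val)) =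
      fun ω => (∏ i ∈ range (n + 1), Y (s + i) ω) -
        Dstar μ (List.ofFn fun i : Fin (n + 1) => Y (s + i.val)) -
        ∑ j ∈ Ico 1 (n + 1), (∏ i ∈ range j, Y (s + i) ω) *
          Dstar μ (List.ofFn fun i : Fin (n + 1 - j) => Y (s + j + i.val)) := by
  intro n
  induction n with
  | zero =>
    intro s
    funext ω
    simp [List.ofFn_succ, Dop, Dstar]
  | succ n ih =>
    intro s
    have hlist := ofFn_shift_succ Y (n + 1) s
    have hT : (List.ofFn fun i : Fin (n + 1) => Y (s + 1 + i.val)) ≠ [] := by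
      simp
    rw [hlist, Dop_cons _ _ _ hT, Dstar_cons _ _ _ hT]
    funext ω
    rw [ih (s + 1)]
    set T := List.ofFn fun i : Fin (n + 1) => Y (s + 1 + i.val) with hTdef
    have hP : ∏ i ∈ range (n + 1 + 1), Y (s + i) ω
        = Y s ω * ∏ i ∈ range (n + 1), Y (s + 1 + i) ω := shift_prod_succ Y (n + 1) s ω
    have hS : ∑ j ∈ Ico 1 (n + 1 + 1), (∏ i ∈ range j, Y (s + i) ω) *
          Dstar μ (List.ofFn fun i : Fin (n + 1 + 1 - j) => Y (s + j + i.val))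
        = Y s ω * Dstar μ T +
          ∑ j ∈ Ico 1 (n + 1), Y s ω * ((∏ i ∈ range j, Y (s + 1 + i) ω) *
            Dstar μ (List.ofFn fun i : Fin (n + 1 - j) => Y (s + 1 + j + i.val))) := by
      rw [Finset.sum_Ico_eq_sum_range,
        show n + 1 + 1 - 1 = n + 1 from rfl,
        Finset.sum_range_succ', add_comm, Finset.sum_Ico_eq_sum_range,
        show n + 1 - 1 = n from rfl]
      refine congrArg₂ (· + ·) ?_ (Finset.sum_congr rfl fun k _ => ?_)
      · -- j = 1 term
        refine congrArg₂ (· * ·) ?_ (congrArg _ ?_)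
        · rw [show (1 : ℕ) + 0 = 1 from rfl, prod_range_one]; norm_num
        · exact ofFn_nat_congr Y (by omega) (by omega)
      · -- remaining terms
        rw [show (1 : ℕ) + (k + 1) = (1 + k) + 1 by omega, shift_prod_succ Y (1 + k) s ω,
          mul_assoc]
        refine congrArg _ (congrArg₂ (· * ·) rfl (congrArg _ ?_))
        exact ofFn_nat_congr Y (by omega) (by omega)
    rw [hS, hP, ← Finset.mul_sum]
    ring

lemma int_shift_prod (μ : Measure Ω) [IsProbabilityMeasure μ] (Y : ℕ → Ω → ℝ)
    (hint : ∀ i j : ℕ, Integrable (fun ω => ∏ k ∈ Finset.Icc i j, Y k ω) μ)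
    (s m : ℕ) : Integrable (fun ω => ∏ i ∈ range m, Y (s + i) ω) μ := by
  cases m with
  | zero => simpa using integrable_const (1 : ℝ)
  | succ m =>
    have heq : (fun ω => ∏ i ∈ range (m + 1), Y (s + i) ω)
        = fun ω => ∏ k ∈ Finset.Icc s (s + m), Y k ω := by
      funext ω
      rw [← Nat.Ico_zero_eq_range, Finset.Ico_add_one_right_eq_Icc,
        show Finset.Icc s (s + m) = Finset.map (addLeftEmbedding s) (Finset.Icc 0 m) by
          rw [Finset.map_add_left_Icc, Nat.add_zero],
        Finset.prod_map]
      exact Finset.prod_congr rfl fun i _ => by rw [addLeftEmbedding_apply]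
    rw [heq]
    exact hint s (s + m)

lemma int_Ys (μ : Measure Ω) [IsProbabilityMeasure μ] (Y : ℕ → Ω → ℝ)
    (hint : ∀ i j : ℕ, Integrable (fun ω => ∏ k ∈ Finset.Icc i j, Y k ω) μ)
    (s : ℕ) : Integrable (Y s) μ := by
  have := int_shift_prod μ Y hint s 1
  simpa using this

lemma dstar_rec (μ : Measure Ω) [IsProbabilityMeasure μ] (Y : ℕ → Ω → ℝ)
    (hint : ∀ i j : ℕ, Integrable (fun ω => ∏ k ∈ Finset.Icc i j, Y k ω) μ) :
    ∀ n s : ℕ, Dstar μ (List.ofFn fun i : Fin (n + 1) => Y (s + i.val)) =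
      (∫ ω, ∏ i ∈ range (n + 1), Y (s + i) ω ∂μ) -
      ∑ m ∈ Ico 1 (n + 1), (∫ ω, ∏ i ∈ range m, Y (s + i) ω ∂μ) *
        Dstar μ (List.ofFn fun i : Fin (n + 1 - m) => Y (s + m + i.val)) := by
  intro n
  cases n with
  | zero =>
    intro s
    simp [List.ofFn_succ, Dstar]
  | succ n =>
    intro s
    have hT : (List.ofFn fun i : Fin (n + 1) => Y (s + 1 + i.val)) ≠ [] := by simp
    rw [ofFn_shift_succ Y (n + 1) s, Dstar_cons _ _ _ hT]
    have hfun : (fun ω => Y s ω * Dop μ (List.ofFn fun i : Fin (n + 1) => Y (s + 1 + i.val)) ω)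
        = fun ω => (∏ i ∈ range (n + 1 + 1), Y (s + i) ω) -
            Y s ω * Dstar μ (List.ofFn fun i : Fin (n + 1) => Y (s + 1 + i.val)) -
            ∑ j ∈ Ico 1 (n + 1), (∏ i ∈ range (j + 1), Y (s + i) ω) *
              Dstar μ (List.ofFn fun i : Fin (n + 1 - j) => Y (s + 1 + j + i.val)) := by
      funext ω
      simp only [dop_exp μ Y n (s + 1)]
      rw [shift_prod_succ Y (n + 1) s ω]
      have hsum : ∑ j ∈ Ico 1 (n + 1), (∏ i ∈ range (j + 1), Y (s + i) ω) *
            Dstar μ (List.ofFn fun i : Fin (n + 1 - j) => Y (s + 1 + j + i.val))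
          = ∑ j ∈ Ico 1 (n + 1), Y s ω * ((∏ i ∈ range j, Y (s + 1 + i) ω) *
            Dstar μ (List.ofFn fun i : Fin (n + 1 - j) => Y (s + 1 + j + i.val))) := by
        refine sum_congr rfl fun j _ => ?_
        rw [shift_prod_succ Y j s ω, mul_assoc]
      rw [hsum, ← Finset.mul_sum]
      ring
    rw [hfun]
    have hf1 : Integrable (fun ω => ∏ i ∈ range (n + 1 + 1), Y (s + i) ω) μ :=
      int_shift_prod μ Y hint s (n + 1 + 1)
    have hf2 : Integrable (fun ω => Y s ω *
        Dstar μ (List.ofFn fun i : Fin (n + 1) => Y (s + 1 + i.val))) μ :=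
      (int_Ys μ Y hint s).mul_const _
    have hf3 : Integrable (fun ω => ∑ j ∈ Ico 1 (n + 1),
        (∏ i ∈ range (j + 1), Y (s + i) ω) *
          Dstar μ (List.ofFn fun i : Fin (n + 1 - j) => Y (s + 1 + j + i.val))) μ :=
      integrable_finset_sum _ fun j _ => (int_shift_prod μ Y hint s (j + 1)).mul_const _
    have hf12 : Integrable (fun ω => (∏ i ∈ range (n + 1 + 1), Y (s + i) ω) -
        Y s ω * Dstar μ (List.ofFn fun i : Fin (n + 1) => Y (s + 1 + i.val))) μ := hf1.sub hf2
    rw [integral_sub hf12 hf3, integral_sub hf1 hf2,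
      integral_mul_const, integral_finset_sum _
        (fun j _ => (int_shift_prod μ Y hint s (j + 1)).mul_const _)]
    have hRsum : ∑ m ∈ Ico 1 (n + 1 + 1), (∫ ω, ∏ i ∈ range m, Y (s + i) ω ∂μ) *
          Dstar μ (List.ofFn fun i : Fin (n + 1 + 1 - m) => Y (s + m + i.val))
        = (∫ ω, Y s ω ∂μ) *
            Dstar μ (List.ofFn fun i : Fin (n + 1) => Y (s + 1 + i.val)) +
          ∑ j ∈ Ico 1 (n + 1), (∫ ω, ∏ i ∈ range (j + 1), Y (s + i) ω ∂μ) *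
            Dstar μ (List.ofFn fun i : Fin (n + 1 - j) => Y (s + 1 + j + i.val)) := by
      rw [Finset.sum_Ico_eq_sum_range, show n + 1 + 1 - 1 = n + 1 from rfl,
        Finset.sum_range_succ', add_comm, Finset.sum_Ico_eq_sum_range,
        show n + 1 - 1 = n from rfl]
      refine congrArg₂ (· + ·) ?_ (Finset.sum_congr rfl fun k _ => ?_)
      · refine congrArg₂ (· * ·) ?_ (congrArg _ (ofFn_nat_congr Y (by omega) (by omega)))
        norm_num
      · refine congrArg₂ (· * ·) ?_ (congrArg _ (ofFn_nat_congr Y (by omega) (by omega)))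
        rw [show 1 + (k + 1) = (1 + k) + 1 by omega]
    rw [hRsum]
    have : ∑ j ∈ Ico 1 (n + 1), ∫ ω, (∏ i ∈ range (j + 1), Y (s + i) ω) *
          Dstar μ (List.ofFn fun i : Fin (n + 1 - j) => Y (s + 1 + j + i.val)) ∂μ
        = ∑ j ∈ Ico 1 (n + 1), (∫ ω, ∏ i ∈ range (j + 1), Y (s + i) ω ∂μ) *
          Dstar μ (List.ofFn fun i : Fin (n + 1 - j) => Y (s + 1 + j + i.val)) :=
      Finset.sum_congr rfl fun j _ => integral_mul_const _ _
    rw [this]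
    ring

/-! ### The combinatorial side -/

def Fb (μ : Measure Ω) (Y : ℕ → Ω → ℝ) : List ℕ → ℕ → ℝ
  | [], _ => 1
  | k :: L, s => (∫ ω, ∏ i ∈ range k, Y (s + i) ω ∂μ) * Fb μ Y L (s + k)

lemma Fb_prod (μ : Measure Ω) (Y : ℕ → Ω → ℝ) (L : List ℕ) :
    ∀ s : ℕ, Fb μ Y L s = ∏ i : Fin L.length,
      ∫ ω, ∏ j ∈ range (L.get i), Y (s + (L.take i.val).sum + j) ω ∂μ := by
  induction L with
  | nil => intro s; simp [Fb]
  | cons k L ih =>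
    intro s
    rw [show Fb μ Y (k :: L) s
        = (∫ ω, ∏ i ∈ range k, Y (s + i) ω ∂μ) * Fb μ Y L (s + k) from rfl]
    simp only [List.length_cons]
    rw [Fin.prod_univ_succ, ih (s + k)]
    refine congrArg₂ (· * ·) ?_ (Finset.prod_congr rfl fun i _ => ?_)
    · refine congrArg _ (funext fun ω => Finset.prod_congr rfl fun j _ => ?_)
      refine congrFun (congrArg Y ?_) ω
      simp
    · refine congrArg _ (funext fun ω => ?_)
      refine Finset.prod_congr rfl fun j _ => congrFun (congrArg Y ?_) ω
      have h1 : (List.take (↑i.succ) (k :: L)).sum = k + (List.take (↑i) L).sum := by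
        simp [List.take_succ_cons]
      have h2 : (k :: L).get i.succ = L.get i := rfl
      rw [h2] at *
      omega

lemma blockProd_eq (μ : Measure Ω) (Y : ℕ → Ω → ℝ) {t : ℕ} (c : Composition t) :
    blockProd μ c Y = Fb μ Y c.blocks 0 := by
  rw [blockProd, Fb_prod]
  refine Finset.prod_congr rfl fun i _ => ?_
  refine congrArg _ (funext fun ω => ?_)
  rw [← Fin.prod_univ_eq_prod_range (fun j => Y (0 + (c.blocks.take i.val).sum + j) ω)]
  refine Finset.prod_congr rfl fun j _ => congrFun (congrArg Y ?_) ω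
  rw [Composition.coe_embedding]
  show c.sizeUpTo i.val + j.val = 0 + (c.blocks.take i.val).sum + j.val
  rw [Composition.sizeUpTo, Nat.zero_add]

def compSum (μ : Measure Ω) (Y : ℕ → Ω → ℝ) (s t : ℕ) : ℝ :=
  ∑ c : Composition t, (-1 : ℝ) ^ (c.length - 1) * Fb μ Y c.blocks s

lemma comp0_blocks (c : Composition 0) : c.blocks = [] := by
  have hs := c.blocks_sum
  cases hb : c.blocks with
  | nil => rfl
  | cons a L =>
    exfalso
    have ha : 0 < a := c.blocks_pos (by rw [hb]; exact List.mem_cons_self)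
    rw [hb, List.sum_cons] at hs
    omega

instance : Subsingleton (Composition 0) :=
  ⟨fun a b => Composition.ext (by rw [comp0_blocks a, comp0_blocks b])⟩

def Phi (n : ℕ) (p : Σ j : Fin (n + 1), Composition (n - j.val)) : Composition (n + 1) :=
  ⟨(p.1.val + 1) :: p.2.blocks,
   by
     intro i hi
     rcases List.mem_cons.mp hi with h | h
     · omega
     · exact p.2.blocks_pos h,
   by
     rw [List.sum_cons, p.2.blocks_sum]
     have := p.1.isLt
     omega⟩

lemma Phi_bij (n : ℕ) : Function.Bijective (Phi n) := by
  constructor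
  · rintro ⟨j, c⟩ ⟨k, d⟩ h
    have hb : (j.val + 1) :: c.blocks = (k.val + 1) :: d.blocks := congrArg Composition.blocks h
    rw [List.cons.injEq] at hb
    obtain ⟨h1, h2⟩ := hb
    have hjk : j = k := Fin.ext (by omega)
    subst hjk
    have : c = d := Composition.ext h2
    subst this
    rfl
  · intro c
    cases hb : c.blocks with
    | nil =>
      exfalso
      have := c.blocks_sum
      rw [hb] at this
      simp at this
    | cons a L =>
      have ha : 0 < a := c.blocks_pos (by rw [hb]; exact List.mem_cons_self)
      have hsum : a + L.sum = n + 1 := by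
        have := c.blocks_sum
        rw [hb, List.sum_cons] at this
        exact this
      have han : a - 1 < n + 1 := by omega
      refine ⟨⟨⟨a - 1, han⟩, ⟨L, ?_, ?_⟩⟩, ?_⟩
      · intro i hi; exact c.blocks_pos (by rw [hb]; exact List.mem_cons_of_mem _ hi)
      · show L.sum = n - (a - 1)
        omega
      · refine Composition.ext ?_
        show (a - 1 + 1) :: L = c.blocks
        rw [hb]
        congr 1
        omega

lemma compSum_rec (μ : Measure Ω) (Y : ℕ → Ω → ℝ) (n s : ℕ) :
    compSum μ Y s (n + 1) =
      (∫ ω, ∏ i ∈ range (n + 1), Y (s + i) ω ∂μ) -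
      ∑ m ∈ Ico 1 (n + 1), (∫ ω, ∏ i ∈ range m, Y (s + i) ω ∂μ) *
        compSum μ Y (s + m) (n + 1 - m) := by
  have h1 : compSum μ Y s (n + 1)
      = ∑ p : (Σ j : Fin (n + 1), Composition (n - j.val)),
          (-1 : ℝ) ^ ((Phi n p).length - 1) * Fb μ Y ((Phi n p).blocks) s :=
    (Fintype.sum_bijective (Phi n) (Phi_bij n) _ _ (fun p => rfl)).symm
  rw [h1, ← Finset.univ_sigma_univ, Finset.sum_sigma]
  have h2 : ∀ (j : Fin (n + 1)) (c : Composition (n - j.val)),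
      (-1 : ℝ) ^ ((Phi n ⟨j, c⟩).length - 1) * Fb μ Y ((Phi n ⟨j, c⟩).blocks) s
      = (-1 : ℝ) ^ c.length *
          ((∫ ω, ∏ i ∈ range (j.val + 1), Y (s + i) ω ∂μ) * Fb μ Y c.blocks (s + (j.val + 1))) := by
    intro j c
    have hlen : (Phi n ⟨j, c⟩).length - 1 = c.length := by
      show ((j.val + 1) :: c.blocks).length - 1 = c.blocks.length
      simp
    rw [hlen]
    refine congrArg _ ?_
    show (∫ ω, ∏ i ∈ range (j.val + 1), Y (s + i) ω ∂μ) * Fb μ Y c.blocks (s + (j.val + 1)) = _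
    rfl
  set g : ℕ → ℝ := fun m => ∑ c : Composition (n - m), (-1 : ℝ) ^ c.length *
      ((∫ ω, ∏ i ∈ range (m + 1), Y (s + i) ω ∂μ) * Fb μ Y c.blocks (s + (m + 1))) with hg
  have h3 : ∀ j : Fin (n + 1), (∑ c : Composition (n - j.val),
        (-1 : ℝ) ^ ((Phi n ⟨j, c⟩).length - 1) * Fb μ Y ((Phi n ⟨j, c⟩).blocks) s)
      = g j.val :=
    fun j => Finset.sum_congr rfl fun c _ => h2 j c
  rw [Finset.sum_congr rfl fun j _ => h3 j, Fin.sum_univ_eq_sum_range g (n + 1),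
    Finset.sum_range_succ]
  have h4 : g n = ∫ ω, ∏ i ∈ range (n + 1), Y (s + i) ω ∂μ := by
    simp only [hg]
    rw [Nat.sub_self]
    rw [Fintype.sum_subsingleton _ (Composition.ones 0)]
    have hb : (Composition.ones 0).blocks = [] := comp0_blocks _
    have hl : (Composition.ones 0).length = 0 := by
      show (Composition.ones 0).blocks.length = 0
      rw [hb]; rfl
    rw [hb, hl]
    show (-1 : ℝ) ^ 0 * (_ * Fb μ Y [] (s + (n + 1))) = _
    rw [show Fb μ Y [] (s + (n + 1)) = 1 from rfl]
    ring
  rw [h4]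
  have h5 : ∑ m ∈ Ico 1 (n + 1), (∫ ω, ∏ i ∈ range m, Y (s + i) ω ∂μ) *
        compSum μ Y (s + m) (n + 1 - m)
      = - ∑ k ∈ range n, g k := by
    rw [Finset.sum_Ico_eq_sum_range, show n + 1 - 1 = n from rfl, ← Finset.sum_neg_distrib]
    refine Finset.sum_congr rfl fun k hk => ?_
    have hk' : k < n := mem_range.mp hk
    simp only [hg]
    have hnk : n + 1 - (1 + k) = n - k := by omega
    rw [hnk]
    rw [compSum]
    rw [Finset.mul_sum, ← Finset.sum_neg_distrib]
    refine Finset.sum_congr rfl fun c _ => ?_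
    have hpos : 0 < c.length := c.length_pos_of_pos (by omega)
    have hexp : (-1 : ℝ) ^ c.length = -(-1 : ℝ) ^ (c.length - 1) := by
      conv_lhs => rw [show c.length = (c.length - 1) + 1 by omega]
      rw [pow_succ]; ring
    rw [hexp]
    have harg1 : (∫ ω, ∏ i ∈ range (1 + k), Y (s + i) ω ∂μ)
        = ∫ ω, ∏ i ∈ range (k + 1), Y (s + i) ω ∂μ := by rw [Nat.add_comm 1 k]
    have harg2 : s + (1 + k) = s + (k + 1) := by omega
    rw [harg1, harg2]
    ring
  rw [h5]
  ring

lemma dstar_eq_compSum (μ : Measure Ω) [IsProbabilityMeasure μ] (Y : ℕ → Ω → ℝ)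
    (hint : ∀ i j : ℕ, Integrable (fun ω => ∏ k ∈ Finset.Icc i j, Y k ω) μ) :
    ∀ t : ℕ, 1 ≤ t → ∀ s : ℕ,
      Dstar μ (List.ofFn fun i : Fin t => Y (s + i.val)) = compSum μ Y s t := by
  intro t
  induction t using Nat.strong_induction_on with
  | _ t ih =>
    intro ht s
    obtain ⟨n, rfl⟩ : ∃ n, t = n + 1 := ⟨t - 1, by omega⟩
    rw [dstar_rec μ Y hint n s, compSum_rec μ Y n s]
    refine congrArg₂ (· - ·) rfl (Finset.sum_congr rfl fun m hm => ?_)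
    have hm' := Finset.mem_Ico.mp hm
    refine congrArg _ ?_
    exact ih (n + 1 - m) (by omega) (by omega) (s + m)

lemma ofFn_drop0 (Y : ℕ → Ω → ℝ) (t j : ℕ) (h : j ≤ t) :
    (List.ofFn fun i : Fin t => Y (0 + i.val)).drop j
      = List.ofFn fun i : Fin (t - j) => Y (0 + j + i.val) := by
  apply List.ext_getElem
  · simp
  · intro i h1 h2
    simp [List.getElem_drop, List.getElem_ofFn]

/-- Lemma F.3 of the paper: the expansion of `𝒟*` as an
alternating sum of block-products over all compositions, and the expansion of
`𝒟` through partial products and `𝒟*` of tails. -/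
theorem Dstar_Dop_expansion
    {Ω : Type*} [MeasurableSpace Ω] (μ : Measure Ω) [IsProbabilityMeasure μ]
    (t : ℕ) (ht : 1 ≤ t) (Y : ℕ → Ω → ℝ)
    (hmeas : ∀ i, Measurable (Y i))
    (hint : ∀ i j : ℕ, Integrable (fun ω => ∏ k ∈ Finset.Icc i j, Y k ω) μ) :
    Dstar μ (List.ofFn fun i : Fin t => Y i.val) =
      (∑ c : Composition t, (-1 : ℝ) ^ (c.length - 1) * blockProd μ c Y) ∧
    Dop μ (List.ofFn fun i : Fin t => Y i.val) =
      fun ω => (∏ i ∈ Finset.range t, Y i ω) -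
        Dstar μ (List.ofFn fun i : Fin t => Y i.val) -
        ∑ j ∈ Finset.Ico 1 t, (∏ i ∈ Finset.range j, Y i ω) *
          Dstar μ ((List.ofFn fun i : Fin t => Y i.val).drop j) := by
  have hl : (List.ofFn fun i : Fin t => Y i.val)
      = List.ofFn fun i : Fin t => Y (0 + i.val) :=
    congrArg _ (funext fun i => congrArg Y (by omega))
  constructor
  · rw [hl, dstar_eq_compSum μ Y hint t ht 0, compSum]
    exact Finset.sum_congr rfl fun c _ => congrArg _ (blockProd_eq μ Y c).symm
  · obtain ⟨n, rfl⟩ : ∃ n, t = n + 1 := ⟨t - 1, by omega⟩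
    rw [hl, dop_exp μ Y n 0]
    funext ω
    refine congrArg₂ (· - ·) (congrArg₂ (· - ·) ?_ rfl) ?_
    · exact Finset.prod_congr rfl fun i _ => by rw [Nat.zero_add]
    · refine Finset.sum_congr rfl fun j hj => ?_
      have hj' := Finset.mem_Ico.mp hj
      refine congrArg₂ (· * ·) (Finset.prod_congr rfl fun i _ => by rw [Nat.zero_add])
        (congrArg _ ?_)
      exact (ofFn_drop0 Y (n + 1) j (by omega)).symm

end Paper

end
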